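/- Let G=(V,E,W) be a finite graph, m_ij ≥ 0 time-independent reals for edges (i,j)∈E with m_ii = −Σ_{j∈N(i)} m_ij. Suppose ρ* ∈ ℝ^N with ρ*_i > 0 and Σ_i ρ*_i = 1 is a stationary measure of the reference process, i.e. Σ_{j∈N(i)} m_ji ρ*_j + m_ii ρ*_i = 0 for every i ∈ V. Define S*_i = −(1/2) log ρ*_i. Then (ρ*, S*) is a stationary point of the SBP Hamiltonian system, i.e. both right-hand sides vanish at (ρ*,S*): Σ_{j∈N(i)} e^{S*_i−S*_j} m_ji √(ρ*_i ρ*_j) − Σ_{j∈N(i)} e^{S*_j−S*_i} m_ij √(ρ*_i ρ*_j) = 0 and −m_ii − (1/2) Σ_{j∈N(i)} e^{S*_j−S*_i} m_ij √(ρ*_j/ρ*_i) − (1/2) Σ_{j∈N(i)} e^{S*_i−S*_j} m_ji √(ρ*_j/ρ*_i) = 0 for every i ∈ V. -/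
import Mathlib


/-- If `ρ*` is a positive stationary probability measure of the reference
process (with rates `m_ij ≥ 0`, `m_ii = −Σ_{j∈N(i)} m_ij`) and `S*_i = −(1/2) log ρ*_i`,
then `(ρ*, S*)` is a stationary point of the SBP Hamiltonian system: both right-hand
sides of the system vanish there. -/
theorem sbp_stationary_point {N : ℕ}
    (G : SimpleGraph (Fin N)) [DecidableRel G.Adj]
    (m : Fin N → Fin N → ℝ)
    (hm_nonneg : ∀ i j, G.Adj i j → 0 ≤ m i j)
    (hm_diag : ∀ i, m i i = - ∑ j ∈ G.neighborFinset i, m i j)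
    (ρstar : Fin N → ℝ)
    (hρ_pos : ∀ i, 0 < ρstar i)
    (hρ_sum : ∑ i, ρstar i = 1)
    (hstat : ∀ i, (∑ j ∈ G.neighborFinset i, m j i * ρstar j) + m i i * ρstar i = 0)
    (Sstar : Fin N → ℝ)
    (hSstar : ∀ i, Sstar i = -(1/2) * Real.log (ρstar i)) :
    (∀ i, (∑ j ∈ G.neighborFinset i,
        Real.exp (Sstar i - Sstar j) * m j i * Real.sqrt (ρstar i * ρstar j))
      - (∑ j ∈ G.neighborFinset i,
        Real.exp (Sstar j - Sstar i) * m i j * Real.sqrt (ρstar i * ρstar j)) = 0) ∧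
    (∀ i, - m i i
      - (1/2) * ∑ j ∈ G.neighborFinset i,
          Real.exp (Sstar j - Sstar i) * m i j * Real.sqrt (ρstar j / ρstar i)
      - (1/2) * ∑ j ∈ G.neighborFinset i,
          Real.exp (Sstar i - Sstar j) * m j i * Real.sqrt (ρstar j / ρstar i) = 0) := by
  have hsq_pos : ∀ i, (0:ℝ) < Real.sqrt (ρstar i) := fun i => Real.sqrt_pos.2 (hρ_pos i)
  have hexp : ∀ i j, Real.exp (Sstar i - Sstar j)
      = Real.sqrt (ρstar j) / Real.sqrt (ρstar i) := by
    intro i j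
    have h1 : Sstar i - Sstar j
        = Real.log (Real.sqrt (ρstar j)) - Real.log (Real.sqrt (ρstar i)) := by
      rw [hSstar i, hSstar j, Real.log_sqrt (hρ_pos j).le, Real.log_sqrt (hρ_pos i).le]
      ring
    rw [h1, Real.exp_sub, Real.exp_log (hsq_pos j), Real.exp_log (hsq_pos i)]
  have hms : ∀ i, Real.sqrt (ρstar i) * Real.sqrt (ρstar i) = ρstar i :=
    fun i => Real.mul_self_sqrt (hρ_pos i).le
  have hterm1 : ∀ i j, Real.exp (Sstar i - Sstar j) * Real.sqrt (ρstar i * ρstar j)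
      = ρstar j := by
    intro i j
    rw [hexp, Real.sqrt_mul (hρ_pos i).le, div_mul_eq_mul_div,
      div_eq_iff (hsq_pos i).ne']
    calc Real.sqrt (ρstar j) * (Real.sqrt (ρstar i) * Real.sqrt (ρstar j))
        = (Real.sqrt (ρstar j) * Real.sqrt (ρstar j)) * Real.sqrt (ρstar i) := by ring
      _ = ρstar j * Real.sqrt (ρstar i) := by rw [hms]
  have hterm2 : ∀ i j, Real.exp (Sstar j - Sstar i) * Real.sqrt (ρstar i * ρstar j)
      = ρstar i := by
    intro i j
    rw [hexp, Real.sqrt_mul (hρ_pos i).le, div_mul_eq_mul_div,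
      div_eq_iff (hsq_pos j).ne']
    calc Real.sqrt (ρstar i) * (Real.sqrt (ρstar i) * Real.sqrt (ρstar j))
        = (Real.sqrt (ρstar i) * Real.sqrt (ρstar i)) * Real.sqrt (ρstar j) := by ring
      _ = ρstar i * Real.sqrt (ρstar j) := by rw [hms]
  have hsqdiv : ∀ i j, Real.sqrt (ρstar j / ρstar i)
      = Real.sqrt (ρstar j) / Real.sqrt (ρstar i) := by
    intro i j
    rw [Real.sqrt_div (hρ_pos j).le]
  have hterm3 : ∀ i j, Real.exp (Sstar j - Sstar i) * Real.sqrt (ρstar j / ρstar i)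
      = 1 := by
    intro i j
    rw [hexp, hsqdiv]
    rw [div_mul_div_comm, mul_comm (Real.sqrt (ρstar i))]
    exact div_self (mul_ne_zero (hsq_pos j).ne' (hsq_pos i).ne')
  have hterm4 : ∀ i j, Real.exp (Sstar i - Sstar j) * Real.sqrt (ρstar j / ρstar i)
      = ρstar j / ρstar i := by
    intro i j
    rw [hexp, hsqdiv, div_mul_div_comm, hms, hms]
  constructor
  · intro i
    have e1 : ∀ j ∈ G.neighborFinset i,
        Real.exp (Sstar i - Sstar j) * m j i * Real.sqrt (ρstar i * ρstar j)
        = m j i * ρstar j := by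
      intro j _
      rw [mul_right_comm, hterm1, mul_comm]
    have e2 : ∀ j ∈ G.neighborFinset i,
        Real.exp (Sstar j - Sstar i) * m i j * Real.sqrt (ρstar i * ρstar j)
        = m i j * ρstar i := by
      intro j _
      rw [mul_right_comm, hterm2, mul_comm]
    rw [Finset.sum_congr rfl e1, Finset.sum_congr rfl e2, ← Finset.sum_mul]
    have hst := hstat i
    have h2 : (∑ j ∈ G.neighborFinset i, m i j) * ρstar i = - (m i i * ρstar i) := by
      rw [hm_diag i]; ring
    linarith
  · intro i
    have e3 : ∀ j ∈ G.neighborFinset i,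
        Real.exp (Sstar j - Sstar i) * m i j * Real.sqrt (ρstar j / ρstar i)
        = m i j := by
      intro j _
      rw [mul_right_comm, hterm3, one_mul]
    have e4 : ∀ j ∈ G.neighborFinset i,
        Real.exp (Sstar i - Sstar j) * m j i * Real.sqrt (ρstar j / ρstar i)
        = m j i * ρstar j / ρstar i := by
      intro j _
      rw [mul_right_comm, hterm4]; ring
    rw [Finset.sum_congr rfl e3, Finset.sum_congr rfl e4, ← Finset.sum_div]
    have hst := hstat i
    have hd := hm_diag i
    have hρi := (hρ_pos i).ne'
    have h3 : (∑ j ∈ G.neighborFinset i, m j i * ρstar j) = - m i i * ρstar i := by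
      linarith
    rw [h3, hd]
    field_simp
    ring
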